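/- arXiv:2201.05132 — 4 statements merged into one kernel-verified Lean document; each statement's English description precedes it below -/
import Mathlib

section
/- Let (Θ₁, μ₁) and (Θ₂, μ₂) be probability spaces and let R : Θ₁ × Θ₂ → ℝ be square-integrable with respect to μ₁ ⊗ μ₂. Then Var^b_{θ₁}(R) − Var^b_{θ₂}(R) = Var^a_{θ₁}(R) − Var^a_{θ₂}(R); that is, the 'before' and 'after' ways of integrating out the other hyperparameter produce the same difference of importances, and hence the same importance ranking of θ₁ versus θ₂. -/
open MeasureTheory

/-- The 'before' importance of the first hyperparameter. -/
noncomputable def varB1 {Θ₁ Θ₂ : Type*} [MeasurableSpace Θ₁] [MeasurableSpace Θ₂]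
    (μ₁ : Measure Θ₁) (μ₂ : Measure Θ₂) (f : Θ₁ × Θ₂ → ℝ) : ℝ :=
  ∫ θ₁, (∫ θ₂, f (θ₁, θ₂) ∂μ₂ - ∫ p, f p ∂(μ₁.prod μ₂)) ^ 2 ∂μ₁

/-- The 'before' importance of the second hyperparameter. -/
noncomputable def varB2 {Θ₁ Θ₂ : Type*} [MeasurableSpace Θ₁] [MeasurableSpace Θ₂]
    (μ₁ : Measure Θ₁) (μ₂ : Measure Θ₂) (f : Θ₁ × Θ₂ → ℝ) : ℝ :=
  ∫ θ₂, (∫ θ₁, f (θ₁, θ₂) ∂μ₁ - ∫ p, f p ∂(μ₁.prod μ₂)) ^ 2 ∂μ₂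

/-- The 'after' importance of the first hyperparameter. -/
noncomputable def varA1 {Θ₁ Θ₂ : Type*} [MeasurableSpace Θ₁] [MeasurableSpace Θ₂]
    (μ₁ : Measure Θ₁) (μ₂ : Measure Θ₂) (f : Θ₁ × Θ₂ → ℝ) : ℝ :=
  ∫ θ₂, ∫ θ₁, (f (θ₁, θ₂) - ∫ θ₁', f (θ₁', θ₂) ∂μ₁) ^ 2 ∂μ₁ ∂μ₂

/-- The 'after' importance of the second hyperparameter. -/
noncomputable def varA2 {Θ₁ Θ₂ : Type*} [MeasurableSpace Θ₁] [MeasurableSpace Θ₂]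
    (μ₁ : Measure Θ₁) (μ₂ : Measure Θ₂) (f : Θ₁ × Θ₂ → ℝ) : ℝ :=
  ∫ θ₁, ∫ θ₂, (f (θ₁, θ₂) - ∫ θ₂', f (θ₁, θ₂') ∂μ₂) ^ 2 ∂μ₂ ∂μ₁

/-- Expansion of a centered second moment for an arbitrary center. -/
lemma int_sq_sub_const {α : Type*} [MeasurableSpace α] (μ : Measure α)
    [IsProbabilityMeasure μ] (a : α → ℝ) (c : ℝ)
    (ha : Integrable a μ) (ha2 : Integrable (fun x => a x ^ 2) μ) :
    ∫ x, (a x - c) ^ 2 ∂μ = ∫ x, a x ^ 2 ∂μ - 2 * c * ∫ x, a x ∂μ + c ^ 2 := by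
  have h : ∀ x, (a x - c) ^ 2 = a x ^ 2 - 2 * c * a x + c ^ 2 := by intro x; ring
  simp_rw [h]
  have h1 : Integrable (fun x => a x ^ 2 - 2 * c * a x) μ := ha2.sub (ha.const_mul (2 * c))
  rw [integral_add h1 (integrable_const _),
    integral_sub ha2 (ha.const_mul (2 * c)), MeasureTheory.integral_const_mul, integral_const]
  simp

/-- Variance expansion: `∫ (a - ∫a)² = ∫ a² - (∫ a)²`. -/
lemma int_sq_sub_mean {α : Type*} [MeasurableSpace α] (μ : Measure α)
    [IsProbabilityMeasure μ] (a : α → ℝ)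
    (ha : Integrable a μ) (ha2 : Integrable (fun x => a x ^ 2) μ) :
    ∫ x, (a x - ∫ y, a y ∂μ) ^ 2 ∂μ = ∫ x, a x ^ 2 ∂μ - (∫ x, a x ∂μ) ^ 2 := by
  rw [int_sq_sub_const μ a _ ha ha2]; ring

/-- Law of total variance: before importance of θ₁ plus after importance of θ₂
equals the total variance. -/
lemma key {Θ₁ Θ₂ : Type*} [MeasurableSpace Θ₁] [MeasurableSpace Θ₂]
    (μ₁ : Measure Θ₁) (μ₂ : Measure Θ₂)
    [IsProbabilityMeasure μ₁] [IsProbabilityMeasure μ₂]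
    (f : Θ₁ × Θ₂ → ℝ) (hf : MemLp f 2 (μ₁.prod μ₂)) :
    varB1 μ₁ μ₂ f + varA2 μ₁ μ₂ f =
      ∫ p, f p ^ 2 ∂(μ₁.prod μ₂) - (∫ p, f p ∂(μ₁.prod μ₂)) ^ 2 := by
  set g : Θ₁ → ℝ := fun θ₁ => ∫ θ₂, f (θ₁, θ₂) ∂μ₂ with hg_def
  have hFi : Integrable f (μ₁.prod μ₂) := hf.integrable (by norm_num)
  have hF2 : Integrable (fun p => f p ^ 2) (μ₁.prod μ₂) := hf.integrable_sq
  have hslice : ∀ᵐ θ₁ ∂μ₁, Integrable (fun θ₂ => f (θ₁, θ₂)) μ₂ := hFi.prod_right_ae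
  have hslice2 : ∀ᵐ θ₁ ∂μ₁, Integrable (fun θ₂ => f (θ₁, θ₂) ^ 2) μ₂ := hF2.prod_right_ae
  -- a.e. pointwise inner expansion
  have hpt : ∀ᵐ θ₁ ∂μ₁,
      ∫ θ₂, (f (θ₁, θ₂) - g θ₁) ^ 2 ∂μ₂ = ∫ θ₂, f (θ₁, θ₂) ^ 2 ∂μ₂ - g θ₁ ^ 2 := by
    filter_upwards [hslice, hslice2] with θ₁ h1 h2
    exact int_sq_sub_mean μ₂ _ h1 h2
  have hg_meas : AEStronglyMeasurable g μ₁ := hFi.aestronglyMeasurable.integral_prod_right'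
  have hI2 : Integrable (fun θ₁ => ∫ θ₂, f (θ₁, θ₂) ^ 2 ∂μ₂) μ₁ := hF2.integral_prod_left
  -- g² is integrable by comparison with the inner second moment
  have hg2 : Integrable (fun θ₁ => g θ₁ ^ 2) μ₁ := by
    refine Integrable.mono' hI2 (hg_meas.pow 2) ?_
    filter_upwards [hslice, hslice2] with θ₁ h1 h2
    have hnn : 0 ≤ ∫ θ₂, (f (θ₁, θ₂) - g θ₁) ^ 2 ∂μ₂ :=
      integral_nonneg fun θ₂ => sq_nonneg _
    rw [int_sq_sub_mean μ₂ _ h1 h2] at hnn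
    have : g θ₁ ^ 2 ≤ ∫ θ₂, f (θ₁, θ₂) ^ 2 ∂μ₂ := by linarith
    simpa [abs_of_nonneg (sq_nonneg (g θ₁))] using this
  have hgInt : Integrable g μ₁ := hFi.integral_prod_left
  have hgmean : ∫ θ₁, g θ₁ ∂μ₁ = ∫ p, f p ∂(μ₁.prod μ₂) := integral_integral hFi
  -- varB1
  have hB : varB1 μ₁ μ₂ f = ∫ θ₁, g θ₁ ^ 2 ∂μ₁ - (∫ p, f p ∂(μ₁.prod μ₂)) ^ 2 := by
    rw [varB1, ← hgmean, int_sq_sub_mean μ₁ g hgInt hg2, hgmean]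
  -- varA2
  have hA : varA2 μ₁ μ₂ f = ∫ p, f p ^ 2 ∂(μ₁.prod μ₂) - ∫ θ₁, g θ₁ ^ 2 ∂μ₁ := by
    rw [varA2, integral_congr_ae hpt, integral_sub hI2 hg2, integral_integral hF2]
  rw [hB, hA]; ring

theorem before_after_importance_difference_eq
    {Θ₁ Θ₂ : Type*} [MeasurableSpace Θ₁] [MeasurableSpace Θ₂]
    (μ₁ : Measure Θ₁) (μ₂ : Measure Θ₂)
    [IsProbabilityMeasure μ₁] [IsProbabilityMeasure μ₂]
    (R : Θ₁ × Θ₂ → ℝ) (hR : MemLp R 2 (μ₁.prod μ₂)) :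
    varB1 μ₁ μ₂ R - varB2 μ₁ μ₂ R = varA1 μ₁ μ₂ R - varA2 μ₁ μ₂ R := by
  have h1 := key μ₁ μ₂ R hR
  have hR' : MemLp (R ∘ Prod.swap) 2 (μ₂.prod μ₁) :=
    hR.comp_measurePreserving Measure.measurePreserving_swap
  have h2 := key μ₂ μ₁ (R ∘ Prod.swap) hR'
  have hswap_int : ∫ p, (R ∘ Prod.swap) p ∂(μ₂.prod μ₁) = ∫ p, R p ∂(μ₁.prod μ₂) := by
    simpa [Function.comp] using integral_prod_swap (f := R) (μ := μ₁) (ν := μ₂)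
  have hswap_int2 : ∫ p, (R ∘ Prod.swap) p ^ 2 ∂(μ₂.prod μ₁) =
      ∫ p, R p ^ 2 ∂(μ₁.prod μ₂) := by
    simpa [Function.comp] using integral_prod_swap (f := fun p => R p ^ 2) (μ := μ₁) (ν := μ₂)
  have hB2 : varB1 μ₂ μ₁ (R ∘ Prod.swap) = varB2 μ₁ μ₂ R := by
    rw [varB1, varB2, hswap_int]; rfl
  have hA1 : varA2 μ₂ μ₁ (R ∘ Prod.swap) = varA1 μ₁ μ₂ R := rfl
  rw [hswap_int, hswap_int2, hB2, hA1] at h2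
  linarith
end

section
/- (Theorem 1, 'before' version.) Let (Θ₁, μ₁) and (Θ₂, μ₂) be probability spaces, let R* : Θ₁ × Θ₂ → ℝ be square-integrable with respect to μ₁ ⊗ μ₂, and for each n let ε_n : Θ₁ × Θ₂ → ℝ be measurable with sup_{(θ₁,θ₂)} |ε_n(θ₁,θ₂)| → 0 as n → ∞. Set R_n = R* + ε_n. If Var^b_{θ₁}(R*) > Var^b_{θ₂}(R*), then there exists N such that for all n ≥ N, Var^b_{θ₁}(R_n) > Var^b_{θ₂}(R_n); i.e. the sample importance ranking of the hyperparameters converges to the population ranking as n → ∞. -/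
open MeasureTheory Filter

lemma int_sq_perturb {Θ : Type*} [MeasurableSpace Θ] (μ : Measure Θ) [IsProbabilityMeasure μ]
    (a b : Θ → ℝ) (ha : MemLp a 2 μ) (hb : AEStronglyMeasurable b μ)
    (δ : ℝ) (hδ : 0 ≤ δ) (hbδ : ∀ θ, |b θ| ≤ δ) :
    |(∫ θ, (a θ + b θ) ^ 2 ∂μ) - ∫ θ, (a θ) ^ 2 ∂μ| ≤
      2 * δ * (∫ θ, |a θ| ∂μ) + δ ^ 2 := by
  have ha2 : Integrable (fun θ => a θ ^ 2) μ := ha.integrable_sq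
  have ha1 : Integrable a μ := ha.integrable one_le_two
  have hab : Integrable (fun θ => b θ * a θ) μ :=
    ha1.bdd_mul hb (Eventually.of_forall fun θ => by
      simpa [Real.norm_eq_abs] using hbδ θ)
  have hb2 : Integrable (fun θ => b θ ^ 2) μ := by
    refine (integrable_const (δ ^ 2)).mono' (hb.mul hb |>.congr ?_) ?_
    · exact Eventually.of_forall fun θ => by simp [Pi.mul_apply, sq]
    · refine Eventually.of_forall fun θ => ?_
      have := hbδ θ
      have h0 := abs_nonneg (b θ)
      rw [Real.norm_eq_abs]
      calc |b θ ^ 2| = |b θ| ^ 2 := abs_pow _ _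
        _ ≤ δ ^ 2 := by nlinarith
  have hrest : Integrable (fun θ => 2 * (b θ * a θ) + b θ ^ 2) μ :=
    (hab.const_mul 2).add hb2
  have hsplit : (∫ θ, (a θ + b θ) ^ 2 ∂μ)
      = (∫ θ, (a θ) ^ 2 ∂μ) + ∫ θ, (2 * (b θ * a θ) + b θ ^ 2) ∂μ := by
    rw [← integral_add ha2 hrest]
    congr 1; funext θ; ring
  rw [hsplit, add_sub_cancel_left]
  calc |∫ θ, (2 * (b θ * a θ) + b θ ^ 2) ∂μ|
      ≤ ∫ θ, |2 * (b θ * a θ) + b θ ^ 2| ∂μ := by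
        exact
          norm_integral_le_integral_norm (fun θ => 2 * (b θ * a θ) + b θ ^ 2) (μ := μ)
    _ ≤ ∫ θ, (2 * δ * |a θ| + δ ^ 2) ∂μ := by
        refine integral_mono hrest.abs (((ha1.abs.const_mul _).add (integrable_const _))) ?_
        intro θ
        have h1 := hbδ θ
        have h2 := abs_nonneg (a θ)
        have h3 := abs_nonneg (b θ)
        have h4 : |b θ * a θ| = |b θ| * |a θ| := abs_mul _ _
        have h5 : |b θ ^ 2| = |b θ| ^ 2 := abs_pow _ _
        calc |2 * (b θ * a θ) + b θ ^ 2| ≤ |2 * (b θ * a θ)| + |b θ ^ 2| := abs_add_le _ _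
          _ = 2 * (|b θ| * |a θ|) + |b θ| ^ 2 := by rw [abs_mul, h4, h5, abs_two]
          _ ≤ 2 * δ * |a θ| + δ ^ 2 := by nlinarith
    _ = 2 * δ * (∫ θ, |a θ| ∂μ) + δ ^ 2 := by
        rw [integral_add (ha1.abs.const_mul _) (integrable_const _), integral_const_mul,
          integral_const]
        simp

lemma varB1_perturb {Θ₁ Θ₂ : Type*} [MeasurableSpace Θ₁] [MeasurableSpace Θ₂]
    (μ₁ : Measure Θ₁) (μ₂ : Measure Θ₂)
    [IsProbabilityMeasure μ₁] [IsProbabilityMeasure μ₂]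
    (f e : Θ₁ × Θ₂ → ℝ) (hf : MemLp f 2 (μ₁.prod μ₂)) (he : Measurable e)
    (δ : ℝ) (hδ : 0 ≤ δ) (heδ : ∀ p, |e p| ≤ δ) :
    |varB1 μ₁ μ₂ (f + e) - varB1 μ₁ μ₂ f| ≤
      2 * (2 * δ) * (∫ θ₁, |∫ θ₂, f (θ₁, θ₂) ∂μ₂ - ∫ p, f p ∂(μ₁.prod μ₂)| ∂μ₁)
        + (2 * δ) ^ 2 := by
  have hfi : Integrable f (μ₁.prod μ₂) := hf.integrable one_le_two
  have hei : Integrable e (μ₁.prod μ₂) := by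
    refine (integrable_const δ).mono' he.aestronglyMeasurable ?_
    exact Eventually.of_forall fun p => by simpa [Real.norm_eq_abs] using heδ p
  set If : ℝ := ∫ p, f p ∂(μ₁.prod μ₂) with hIf
  set Ie : ℝ := ∫ p, e p ∂(μ₁.prod μ₂) with hIe
  set a : Θ₁ → ℝ := fun θ₁ => (∫ θ₂, f (θ₁, θ₂) ∂μ₂) - If with haa
  set b : Θ₁ → ℝ := fun θ₁ => (∫ θ₂, e (θ₁, θ₂) ∂μ₂) - Ie with hbb
  have hf2 : Integrable (fun p => f p ^ 2) (μ₁.prod μ₂) := hf.integrable_sq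
  have hg : Integrable (fun θ₁ => ∫ θ₂, f (θ₁, θ₂) ^ 2 ∂μ₂) μ₁ := hf2.integral_prod_left
  have hh : Integrable (fun θ₁ => ∫ θ₂, f (θ₁, θ₂) ∂μ₂) μ₁ := hfi.integral_prod_left
  have hsq : Integrable (fun θ₁ => (∫ θ₂, f (θ₁, θ₂) ∂μ₂) ^ 2) μ₁ := by
    refine hg.mono' (hh.aestronglyMeasurable.pow 2) ?_
    filter_upwards [hfi.prod_right_ae, hf2.prod_right_ae] with θ₁ h1 h2
    have hm : MemLp (fun θ₂ => f (θ₁, θ₂)) 2 μ₂ :=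
      (memLp_two_iff_integrable_sq h1.aestronglyMeasurable).mpr h2
    have := ProbabilityTheory.variance_nonneg (fun θ₂ => f (θ₁, θ₂)) μ₂
    rw [ProbabilityTheory.variance_eq_sub hm] at this
    rw [Real.norm_eq_abs, abs_pow]
    calc |∫ θ₂, f (θ₁, θ₂) ∂μ₂| ^ 2 = (∫ θ₂, f (θ₁, θ₂) ∂μ₂) ^ 2 := by rw [sq_abs]
      _ ≤ ∫ θ₂, f (θ₁, θ₂) ^ 2 ∂μ₂ := by
          simpa [Pi.pow_apply] using sub_nonneg.mp this
  have ha : MemLp a 2 μ₁ := by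
    have h1 : MemLp (fun θ₁ => ∫ θ₂, f (θ₁, θ₂) ∂μ₂) 2 μ₁ :=
      (memLp_two_iff_integrable_sq hh.aestronglyMeasurable).mpr hsq
    exact h1.sub (memLp_const If)
  have hbmeas : AEStronglyMeasurable b μ₁ :=
    (hei.integral_prod_left.aestronglyMeasurable).sub aestronglyMeasurable_const
  have hbbd : ∀ θ₁, |b θ₁| ≤ 2 * δ := by
    intro θ₁
    have h1 : |∫ θ₂, e (θ₁, θ₂) ∂μ₂| ≤ δ := by
      have := norm_integral_le_of_norm_le_const (μ := μ₂)
        (f := fun θ₂ => e (θ₁, θ₂)) (C := δ)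
        (Eventually.of_forall fun θ₂ => by simpa [Real.norm_eq_abs] using heδ (θ₁, θ₂))
      simpa [Real.norm_eq_abs] using this
    have h2 : |Ie| ≤ δ := by
      have := norm_integral_le_of_norm_le_const (μ := μ₁.prod μ₂) (f := e) (C := δ)
        (Eventually.of_forall fun p => by simpa [Real.norm_eq_abs] using heδ p)
      simpa [Real.norm_eq_abs, hIe] using this
    calc |b θ₁| ≤ |∫ θ₂, e (θ₁, θ₂) ∂μ₂| + |Ie| := abs_sub _ _
      _ ≤ 2 * δ := by linarith
  have hkey : varB1 μ₁ μ₂ (f + e) = ∫ θ₁, (a θ₁ + b θ₁) ^ 2 ∂μ₁ := by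
    unfold varB1
    refine integral_congr_ae ?_
    filter_upwards [hfi.prod_right_ae, hei.prod_right_ae] with θ₁ h1 h2
    have hsum : (∫ θ₂, (f + e) (θ₁, θ₂) ∂μ₂)
        = (∫ θ₂, f (θ₁, θ₂) ∂μ₂) + ∫ θ₂, e (θ₁, θ₂) ∂μ₂ := by
      simpa using integral_add h1 h2
    have hIsum : (∫ p, (f + e) p ∂(μ₁.prod μ₂)) = If + Ie := by
      simpa using integral_add hfi hei
    rw [hsum, hIsum, haa, hbb]; ring
  have hkey2 : varB1 μ₁ μ₂ f = ∫ θ₁, (a θ₁) ^ 2 ∂μ₁ := rfl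
  rw [hkey, hkey2]
  exact int_sq_perturb μ₁ a b ha hbmeas (2 * δ) (by linarith) hbbd

lemma varB2_eq_varB1_swap {Θ₁ Θ₂ : Type*} [MeasurableSpace Θ₁] [MeasurableSpace Θ₂]
    (μ₁ : Measure Θ₁) (μ₂ : Measure Θ₂)
    [SFinite μ₁] [SFinite μ₂] (g : Θ₁ × Θ₂ → ℝ) :
    varB2 μ₁ μ₂ g = varB1 μ₂ μ₁ (fun p => g p.swap) := by
  unfold varB1 varB2
  have h : (∫ p, g p.swap ∂(μ₂.prod μ₁)) = ∫ p, g p ∂(μ₁.prod μ₂) :=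
    integral_prod_swap g
  rw [h]
  rfl

theorem importance_ranking_eventually_consistent_before
    {Θ₁ Θ₂ : Type*} [MeasurableSpace Θ₁] [MeasurableSpace Θ₂]
    (μ₁ : Measure Θ₁) (μ₂ : Measure Θ₂)
    [IsProbabilityMeasure μ₁] [IsProbabilityMeasure μ₂]
    (Rstar : Θ₁ × Θ₂ → ℝ) (hRstar : MemLp Rstar 2 (μ₁.prod μ₂))
    (ε : ℕ → Θ₁ × Θ₂ → ℝ) (hmeas : ∀ n, Measurable (ε n))
    (hunif : ∀ δ > (0 : ℝ), ∃ N : ℕ, ∀ n ≥ N, ∀ p : Θ₁ × Θ₂, |ε n p| ≤ δ)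
    (hrank : varB2 μ₁ μ₂ Rstar < varB1 μ₁ μ₂ Rstar) :
    ∃ N : ℕ, ∀ n ≥ N,
      varB2 μ₁ μ₂ (Rstar + ε n) < varB1 μ₁ μ₂ (Rstar + ε n) := by
  -- swapped versions
  have hswapR : MemLp (fun p : Θ₂ × Θ₁ => Rstar p.swap) 2 (μ₂.prod μ₁) := by
    have hmap : Measure.map (⇑((MeasurableEquiv.prodComm : Θ₂ × Θ₁ ≃ᵐ Θ₁ × Θ₂))) (μ₂.prod μ₁)
        = μ₁.prod μ₂ := by
      simpa [MeasurableEquiv.prodComm] using Measure.prod_swap (μ := μ₂) (ν := μ₁)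
    have := (((MeasurableEquiv.prodComm : Θ₂ × Θ₁ ≃ᵐ Θ₁ × Θ₂)).memLp_map_measure_iff
      (g := Rstar) (p := 2) (μ := μ₂.prod μ₁)).mp (by rwa [hmap])
    exact this
  set C₁ : ℝ := ∫ θ₁, |∫ θ₂, Rstar (θ₁, θ₂) ∂μ₂ - ∫ p, Rstar p ∂(μ₁.prod μ₂)| ∂μ₁ with hC₁
  set C₂ : ℝ := ∫ θ₂, |∫ θ₁, (fun p : Θ₂ × Θ₁ => Rstar p.swap) (θ₂, θ₁) ∂μ₁
      - ∫ p, (fun p : Θ₂ × Θ₁ => Rstar p.swap) p ∂(μ₂.prod μ₁)| ∂μ₂ with hC₂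
  have hC₁0 : 0 ≤ C₁ := integral_nonneg fun _ => abs_nonneg _
  have hC₂0 : 0 ≤ C₂ := integral_nonneg fun _ => abs_nonneg _
  set K : ℝ := max C₁ C₂ + 1 with hK
  have hK1 : 1 ≤ K := by
    have : (0:ℝ) ≤ max C₁ C₂ := le_max_iff.mpr (Or.inl hC₁0)
    linarith
  have hKC₁ : C₁ + 1 ≤ K := by have := le_max_left C₁ C₂; linarith
  have hKC₂ : C₂ + 1 ≤ K := by have := le_max_right C₁ C₂; linarith
  set gap : ℝ := varB1 μ₁ μ₂ Rstar - varB2 μ₁ μ₂ Rstar with hgapdef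
  have hgap : 0 < gap := by simp only [hgapdef]; linarith
  set δ : ℝ := min 1 (gap / (17 * K)) with hδdef
  have hδpos : 0 < δ := by
    apply lt_min one_pos
    positivity
  have hδ1 : δ ≤ 1 := min_le_left _ _
  have hδ2 : 17 * K * δ ≤ gap := by
    have h := min_le_right 1 (gap / (17 * K))
    have hKpos : (0:ℝ) < 17 * K := by linarith
    calc 17 * K * δ ≤ 17 * K * (gap / (17 * K)) := by
          exact mul_le_mul_of_nonneg_left h hKpos.le
      _ = gap := by field_simp
  obtain ⟨N, hN⟩ := hunif δ hδpos
  refine ⟨N, fun n hn => ?_⟩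
  have heδ := hN n hn
  -- perturbation bound for varB1
  have h1 := varB1_perturb μ₁ μ₂ Rstar (ε n) hRstar (hmeas n) δ hδpos.le heδ
  -- perturbation bound for varB2 via swap
  have hmeas' : Measurable (fun p : Θ₂ × Θ₁ => ε n p.swap) :=
    (hmeas n).comp measurable_swap
  have h2' := varB1_perturb μ₂ μ₁ (fun p => Rstar p.swap) (fun p => ε n p.swap)
    hswapR hmeas' δ hδpos.le (fun p => heδ p.swap)
  have hcomp : ((fun p : Θ₂ × Θ₁ => Rstar p.swap) + fun p => ε n p.swap)
      = (fun p : Θ₂ × Θ₁ => (Rstar + ε n) p.swap) := rfl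
  rw [hcomp] at h2'
  rw [← varB2_eq_varB1_swap μ₁ μ₂ (Rstar + ε n), ← varB2_eq_varB1_swap μ₁ μ₂ Rstar,
    ← hC₂] at h2'
  rw [← hC₁] at h1
  rw [abs_sub_le_iff] at h1 h2'
  have e1 := h1.2   -- varB1 Rstar - varB1 (Rstar+εn) ≤ ...
  have e2 := h2'.1  -- varB2 (Rstar+εn) - varB2 Rstar ≤ ...
  nlinarith [mul_le_mul_of_nonneg_left hKC₁ hδpos.le,
    mul_le_mul_of_nonneg_left hKC₂ hδpos.le,
    mul_le_mul_of_nonneg_left hδ1 hδpos.le, hδpos.le, hgap]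
end

section
/- (Theorem 1, 'after' version.) Let (Θ₁, μ₁) and (Θ₂, μ₂) be probability spaces, let R* : Θ₁ × Θ₂ → ℝ be square-integrable with respect to μ₁ ⊗ μ₂, and for each n let ε_n : Θ₁ × Θ₂ → ℝ be measurable with sup_{(θ₁,θ₂)} |ε_n(θ₁,θ₂)| → 0 as n → ∞. Set R_n = R* + ε_n. If Var^a_{θ₁}(R*) > Var^a_{θ₂}(R*), then there exists N such that for all n ≥ N, Var^a_{θ₁}(R_n) > Var^a_{θ₂}(R_n). -/
open MeasureTheory Filter

section Aux

/-- Pointwise algebraic bound for a perturbed square. -/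
lemma sq_perturb_bounds (a b δ : ℝ) (hδ : 0 ≤ δ) (hb : |b| ≤ 2 * δ) :
    (a + b) ^ 2 ≤ (1 + 2 * δ) * a ^ 2 + (2 * δ + 4 * δ ^ 2) ∧
    (1 - 2 * δ) * a ^ 2 - 2 * δ ≤ (a + b) ^ 2 := by
  have hab : |a * b| ≤ |a| * (2 * δ) := by
    rw [abs_mul]
    exact mul_le_mul_of_nonneg_left hb (abs_nonneg a)
  obtain ⟨hab1, hab2⟩ := abs_le.mp hab
  have h2 : 2 * |a| ≤ 1 + a ^ 2 := by nlinarith [sq_nonneg (|a| - 1), sq_abs a]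
  have h3 : δ * (2 * |a|) ≤ δ * (1 + a ^ 2) := mul_le_mul_of_nonneg_left h2 hδ
  have hb2 : b ^ 2 ≤ 4 * δ ^ 2 := by nlinarith [sq_abs b, abs_nonneg b]
  have hb0 : 0 ≤ b ^ 2 := sq_nonneg b
  constructor <;> nlinarith [sq_abs a, abs_nonneg a]

variable {α : Type*} [MeasurableSpace α] {μ : Measure α} [IsProbabilityMeasure μ]

lemma var_le_sq {s : α → ℝ} (hs : MemLp s 2 μ) :
    ∫ x, (s x - ∫ y, s y ∂μ) ^ 2 ∂μ ≤ ∫ x, (s x) ^ 2 ∂μ := by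
  set m := ∫ y, s y ∂μ with hm
  have hsi : Integrable s μ := hs.integrable one_le_two
  have h2 : Integrable (fun x => s x ^ 2) μ := hs.integrable_sq
  have hI1 : Integrable (fun x => s x ^ 2 - 2 * m * s x) μ := by
    exact h2.sub (hsi.const_mul (2 * m))
  have hI2 : Integrable (fun x => 2 * m * s x) μ := by exact hsi.const_mul (2 * m)
  have hfe : ∫ x, (s x - m) ^ 2 ∂μ = ∫ x, (s x ^ 2 - 2 * m * s x + m ^ 2) ∂μ := by
    congr 1; funext x; ring
  rw [hfe, integral_add hI1 (integrable_const _),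
    integral_sub h2 hI2, integral_const_mul, integral_const]
  simp only [measure_univ, ENNReal.toReal_one, probReal_univ, one_smul, ← hm]
  nlinarith [sq_nonneg m]

/-- Bound on the variance of a boundedly perturbed function. -/
lemma inner_bound {s t : α → ℝ} (hs : MemLp s 2 μ) (ht : AEStronglyMeasurable t μ)
    {δ : ℝ} (hδ : 0 ≤ δ) (htb : ∀ x, |t x| ≤ δ) :
    (∫ x, (s x + t x - ∫ y, (s y + t y) ∂μ) ^ 2 ∂μ ≤
      (1 + 2 * δ) * (∫ x, (s x - ∫ y, s y ∂μ) ^ 2 ∂μ) + (2 * δ + 4 * δ ^ 2)) ∧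
    ((1 - 2 * δ) * (∫ x, (s x - ∫ y, s y ∂μ) ^ 2 ∂μ) - 2 * δ ≤
      ∫ x, (s x + t x - ∫ y, (s y + t y) ∂μ) ^ 2 ∂μ) := by
  have htm : MemLp t 2 μ :=
    MemLp.of_bound ht δ (Eventually.of_forall fun x => by
      simpa [Real.norm_eq_abs] using htb x)
  have hst : MemLp (fun x => s x + t x) 2 μ := hs.add htm
  have hsi : Integrable s μ := hs.integrable one_le_two
  have hti : Integrable t μ := htm.integrable one_le_two
  set ms := ∫ y, s y ∂μ with hms
  set mt := ∫ y, t y ∂μ with hmt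
  have hm : ∫ y, (s y + t y) ∂μ = ms + mt := integral_add hsi hti
  have hmtb : |mt| ≤ δ := by
    rw [hmt, ← Real.norm_eq_abs]
    calc ‖∫ y, t y ∂μ‖ ≤ ∫ y, ‖t y‖ ∂μ := norm_integral_le_integral_norm t
      _ ≤ ∫ _, δ ∂μ := integral_mono hti.norm (integrable_const δ)
            (fun x => by simpa [Real.norm_eq_abs] using htb x)
      _ = δ := by simp [measure_univ]
  have hh2 : Integrable (fun x => (s x - ms) ^ 2) μ := (hs.sub (memLp_const ms)).integrable_sq
  have hH2 : Integrable (fun x => (s x + t x - (ms + mt)) ^ 2) μ :=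
    (hst.sub (memLp_const (ms + mt))).integrable_sq
  have key : ∀ x, (s x + t x - (ms + mt)) ^ 2 ≤
      (1 + 2 * δ) * (s x - ms) ^ 2 + (2 * δ + 4 * δ ^ 2) ∧
      (1 - 2 * δ) * (s x - ms) ^ 2 - 2 * δ ≤ (s x + t x - (ms + mt)) ^ 2 := by
    intro x
    have hbb : |t x - mt| ≤ 2 * δ := by
      calc |t x - mt| ≤ |t x| + |mt| := abs_sub _ _
        _ ≤ δ + δ := add_le_add (htb x) hmtb
        _ = 2 * δ := by ring
    have := sq_perturb_bounds (s x - ms) (t x - mt) δ hδ hbb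
    have heq : s x - ms + (t x - mt) = s x + t x - (ms + mt) := by ring
    rwa [heq] at this
  rw [hm]
  constructor
  · calc ∫ x, (s x + t x - (ms + mt)) ^ 2 ∂μ
        ≤ ∫ x, ((1 + 2 * δ) * (s x - ms) ^ 2 + (2 * δ + 4 * δ ^ 2)) ∂μ :=
          integral_mono hH2 ((hh2.const_mul _).add (integrable_const _)) (fun x => (key x).1)
      _ = (1 + 2 * δ) * (∫ x, (s x - ms) ^ 2 ∂μ) + (2 * δ + 4 * δ ^ 2) := by
          have hc : Integrable (fun x => (1 + 2 * δ) * (s x - ms) ^ 2) μ := by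
            exact hh2.const_mul _
          rw [integral_add hc (integrable_const _), integral_const_mul, integral_const]
          simp [measure_univ]
  · calc (1 - 2 * δ) * (∫ x, (s x - ms) ^ 2 ∂μ) - 2 * δ
        = ∫ x, ((1 - 2 * δ) * (s x - ms) ^ 2 - 2 * δ) ∂μ := by
          have hc : Integrable (fun x => (1 - 2 * δ) * (s x - ms) ^ 2) μ := by
            exact hh2.const_mul _
          rw [integral_sub hc (integrable_const _), integral_const_mul, integral_const]
          simp [measure_univ]
      _ ≤ ∫ x, (s x + t x - (ms + mt)) ^ 2 ∂μ :=
          integral_mono ((hh2.const_mul _).sub (integrable_const _)) hH2 (fun x => (key x).2)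

variable {Θ₁ Θ₂ : Type*} [MeasurableSpace Θ₁] [MeasurableSpace Θ₂]
  {μ₁ : Measure Θ₁} {μ₂ : Measure Θ₂} [IsProbabilityMeasure μ₁] [IsProbabilityMeasure μ₂]

/-- The inner integral appearing in `varA1`. -/
noncomputable def innerVar (μ₁ : Measure Θ₁) (q : Θ₁ × Θ₂ → ℝ) (θ₂ : Θ₂) : ℝ :=
  ∫ θ₁, (q (θ₁, θ₂) - ∫ θ₁', q (θ₁', θ₂) ∂μ₁) ^ 2 ∂μ₁

lemma varA1_eq (q : Θ₁ × Θ₂ → ℝ) : varA1 μ₁ μ₂ q = ∫ θ₂, innerVar μ₁ q θ₂ ∂μ₂ := rfl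

lemma innerVar_nonneg (q : Θ₁ × Θ₂ → ℝ) (θ₂ : Θ₂) : 0 ≤ innerVar μ₁ q θ₂ :=
  integral_nonneg fun _ => sq_nonneg _

lemma slice_memℒp {q : Θ₁ × Θ₂ → ℝ} (hq : MemLp q 2 (μ₁.prod μ₂)) :
    ∀ᵐ θ₂ ∂μ₂, MemLp (fun θ₁ => q (θ₁, θ₂)) 2 μ₁ := by
  have hsq : Integrable (fun p => q p ^ 2) (μ₁.prod μ₂) := hq.integrable_sq
  have h1 : ∀ᵐ θ₂ ∂μ₂, Integrable (fun θ₁ => q (θ₁, θ₂) ^ 2) μ₁ := hsq.prod_left_ae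
  have h2 : ∀ᵐ θ₂ ∂μ₂, AEStronglyMeasurable (fun θ₁ => q (θ₁, θ₂)) μ₁ :=
    hq.aestronglyMeasurable.prod_swap.prodMk_left
  filter_upwards [h1, h2] with θ₂ h1 h2
  exact (memLp_two_iff_integrable_sq h2).mpr h1

lemma innerVar_aesm {q : Θ₁ × Θ₂ → ℝ} (hq : MemLp q 2 (μ₁.prod μ₂)) :
    AEStronglyMeasurable (innerVar μ₁ q) μ₂ := by
  have h0 : AEStronglyMeasurable q (μ₁.prod μ₂) := hq.aestronglyMeasurable
  have hm : AEStronglyMeasurable (fun θ₂ => ∫ θ₁', q (θ₁', θ₂) ∂μ₁) μ₂ :=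
    h0.prod_swap.integral_prod_right'
  have hΦ : AEStronglyMeasurable
      (fun p : Θ₁ × Θ₂ => (q p - ∫ θ₁', q (θ₁', p.2) ∂μ₁) ^ 2) (μ₁.prod μ₂) := by
    have := (h0.sub hm.comp_snd)
    exact this.pow 2
  exact hΦ.prod_swap.integral_prod_right'

lemma innerVar_integrable {q : Θ₁ × Θ₂ → ℝ} (hq : MemLp q 2 (μ₁.prod μ₂)) :
    Integrable (innerVar μ₁ q) μ₂ := by
  have hsq : Integrable (fun p => q p ^ 2) (μ₁.prod μ₂) := hq.integrable_sq
  have hG : Integrable (fun θ₂ => ∫ θ₁, q (θ₁, θ₂) ^ 2 ∂μ₁) μ₂ := hsq.integral_prod_right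
  refine hG.mono' (innerVar_aesm hq) ?_
  filter_upwards [slice_memℒp hq] with θ₂ hs
  rw [Real.norm_eq_abs, abs_of_nonneg (innerVar_nonneg q θ₂)]
  exact var_le_sq hs

lemma varA1_perturb {f g : Θ₁ × Θ₂ → ℝ} (hf : MemLp f 2 (μ₁.prod μ₂))
    (hg : Measurable g) {δ : ℝ} (hδ : 0 ≤ δ) (hgb : ∀ p, |g p| ≤ δ) :
    varA1 μ₁ μ₂ (f + g) ≤ (1 + 2 * δ) * varA1 μ₁ μ₂ f + (2 * δ + 4 * δ ^ 2) ∧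
    (1 - 2 * δ) * varA1 μ₁ μ₂ f - 2 * δ ≤ varA1 μ₁ μ₂ (f + g) := by
  have hgm : MemLp g 2 (μ₁.prod μ₂) :=
    MemLp.of_bound hg.aestronglyMeasurable δ
      (Eventually.of_forall fun p => by simpa [Real.norm_eq_abs] using hgb p)
  have hfg : MemLp (f + g) 2 (μ₁.prod μ₂) := hf.add hgm
  have hIf : Integrable (innerVar μ₁ f) μ₂ := innerVar_integrable hf
  have hIF : Integrable (innerVar μ₁ (f + g)) μ₂ := innerVar_integrable hfg
  have key : ∀ᵐ θ₂ ∂μ₂,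
      innerVar μ₁ (f + g) θ₂ ≤ (1 + 2 * δ) * innerVar μ₁ f θ₂ + (2 * δ + 4 * δ ^ 2) ∧
      (1 - 2 * δ) * innerVar μ₁ f θ₂ - 2 * δ ≤ innerVar μ₁ (f + g) θ₂ := by
    filter_upwards [slice_memℒp hf] with θ₂ hs
    have htmeas : AEStronglyMeasurable (fun θ₁ => g (θ₁, θ₂)) μ₁ :=
      (hg.comp (measurable_prodMk_right)).aestronglyMeasurable
    have := inner_bound hs htmeas hδ (fun θ₁ => hgb (θ₁, θ₂))
    exact this
  rw [varA1_eq, varA1_eq]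
  constructor
  · calc ∫ θ₂, innerVar μ₁ (f + g) θ₂ ∂μ₂
        ≤ ∫ θ₂, ((1 + 2 * δ) * innerVar μ₁ f θ₂ + (2 * δ + 4 * δ ^ 2)) ∂μ₂ :=
          integral_mono_ae hIF ((hIf.const_mul _).add (integrable_const _))
            (key.mono fun θ₂ h => h.1)
      _ = (1 + 2 * δ) * (∫ θ₂, innerVar μ₁ f θ₂ ∂μ₂) + (2 * δ + 4 * δ ^ 2) := by
          have hc : Integrable (fun θ₂ => (1 + 2 * δ) * innerVar μ₁ f θ₂) μ₂ := by
            exact hIf.const_mul _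
          rw [integral_add hc (integrable_const _), integral_const_mul, integral_const]
          simp [measure_univ]
  · calc (1 - 2 * δ) * (∫ θ₂, innerVar μ₁ f θ₂ ∂μ₂) - 2 * δ
        = ∫ θ₂, ((1 - 2 * δ) * innerVar μ₁ f θ₂ - 2 * δ) ∂μ₂ := by
          have hc : Integrable (fun θ₂ => (1 - 2 * δ) * innerVar μ₁ f θ₂) μ₂ := by
            exact hIf.const_mul _
          rw [integral_sub hc (integrable_const _), integral_const_mul, integral_const]
          simp [measure_univ]
      _ ≤ ∫ θ₂, innerVar μ₁ (f + g) θ₂ ∂μ₂ :=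
          integral_mono_ae ((hIf.const_mul _).sub (integrable_const _)) hIF
            (key.mono fun θ₂ h => h.2)

lemma varA2_eq_varA1_swap (f : Θ₁ × Θ₂ → ℝ) :
    varA2 μ₁ μ₂ f = varA1 μ₂ μ₁ (f ∘ Prod.swap) := rfl

lemma varA1_nonneg (f : Θ₁ × Θ₂ → ℝ) : 0 ≤ varA1 μ₁ μ₂ f :=
  integral_nonneg fun _ => integral_nonneg fun _ => sq_nonneg _

lemma varA2_nonneg (f : Θ₁ × Θ₂ → ℝ) : 0 ≤ varA2 μ₁ μ₂ f :=
  integral_nonneg fun _ => integral_nonneg fun _ => sq_nonneg _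

end Aux

theorem importance_ranking_eventually_consistent_after
    {Θ₁ Θ₂ : Type*} [MeasurableSpace Θ₁] [MeasurableSpace Θ₂]
    (μ₁ : Measure Θ₁) (μ₂ : Measure Θ₂)
    [IsProbabilityMeasure μ₁] [IsProbabilityMeasure μ₂]
    (Rstar : Θ₁ × Θ₂ → ℝ) (hRstar : MemLp Rstar 2 (μ₁.prod μ₂))
    (ε : ℕ → Θ₁ × Θ₂ → ℝ) (hmeas : ∀ n, Measurable (ε n))
    (hunif : ∀ δ > (0 : ℝ), ∃ N : ℕ, ∀ n ≥ N, ∀ p : Θ₁ × Θ₂, |ε n p| ≤ δ)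
    (hrank : varA2 μ₁ μ₂ Rstar < varA1 μ₁ μ₂ Rstar) :
    ∃ N : ℕ, ∀ n ≥ N,
      varA2 μ₁ μ₂ (Rstar + ε n) < varA1 μ₁ μ₂ (Rstar + ε n) := by
  set V₁ := varA1 μ₁ μ₂ Rstar with hV₁
  set V₂ := varA2 μ₁ μ₂ Rstar with hV₂
  have hV₁0 : 0 ≤ V₁ := varA1_nonneg Rstar
  have hV₂0 : 0 ≤ V₂ := varA2_nonneg Rstar
  have hG : 0 < V₁ - V₂ := sub_pos.mpr hrank
  set D : ℝ := 2 * (V₁ + V₂) + 9 with hD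
  have hDpos : 0 < D := by positivity
  set δ : ℝ := min 1 ((V₁ - V₂) / D) with hδdef
  have hδpos : 0 < δ := lt_min one_pos (div_pos hG hDpos)
  have hδ0 : 0 ≤ δ := hδpos.le
  have hδ1 : δ ≤ 1 := min_le_left _ _
  have hδD : δ * D ≤ V₁ - V₂ := by
    rw [← le_div_iff₀ hDpos]
    exact min_le_right _ _
  obtain ⟨N, hN⟩ := hunif δ hδpos
  refine ⟨N, fun n hn => ?_⟩
  have hb : ∀ p, |ε n p| ≤ δ := hN n hn
  have h1 := varA1_perturb hRstar (hmeas n) hδ0 hb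
  have hswap : MemLp (Rstar ∘ Prod.swap) 2 (μ₂.prod μ₁) :=
    hRstar.comp_measurePreserving Measure.measurePreserving_swap
  have h2' := varA1_perturb (μ₁ := μ₂) (μ₂ := μ₁) hswap
    ((hmeas n).comp measurable_swap) hδ0 (fun p => hb p.swap)
  have hswapeq : varA1 μ₂ μ₁ (Rstar ∘ Prod.swap + ε n ∘ Prod.swap)
      = varA2 μ₁ μ₂ (Rstar + ε n) := rfl
  have hswapeq2 : varA1 μ₂ μ₁ (Rstar ∘ Prod.swap) = V₂ := rfl
  rw [hswapeq, hswapeq2] at h2'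
  have hup : varA2 μ₁ μ₂ (Rstar + ε n) ≤ (1 + 2 * δ) * V₂ + (2 * δ + 4 * δ ^ 2) := h2'.1
  have hlo : (1 - 2 * δ) * V₁ - 2 * δ ≤ varA1 μ₁ μ₂ (Rstar + ε n) := h1.2
  have hfinal : (1 + 2 * δ) * V₂ + (2 * δ + 4 * δ ^ 2) < (1 - 2 * δ) * V₁ - 2 * δ := by
    have hδsq : δ ^ 2 ≤ δ := by nlinarith
    nlinarith
  linarith
end

section
/- Let (Θ₁, μ₁) and (Θ₂, μ₂) be probability spaces and let ε₁, …, ε_T : Θ₁ × Θ₂ → ℝ be square-integrable with respect to μ₁ ⊗ μ₂, all having the same 'before' importance of θ₁: Var^b_{θ₁}(ε_t) = v for every t. Then the averaged error ε̄ = (1/T) Σ_{t=1}^T ε_t satisfies Var^b_{θ₁}(ε̄) ≤ v. -/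
open MeasureTheory Finset

theorem varB1_average_le
    {Θ₁ Θ₂ : Type*} [MeasurableSpace Θ₁] [MeasurableSpace Θ₂]
    (μ₁ : Measure Θ₁) (μ₂ : Measure Θ₂)
    [IsProbabilityMeasure μ₁] [IsProbabilityMeasure μ₂]
    (T : ℕ) (hT : 0 < T) (ε : Fin T → Θ₁ × Θ₂ → ℝ)
    (hε : ∀ t, MemLp (ε t) 2 (μ₁.prod μ₂))
    (v : ℝ) (hvar : ∀ t, varB1 μ₁ μ₂ (ε t) = v) :
    varB1 μ₁ μ₂ (fun p => (1 / (T : ℝ)) * ∑ t : Fin T, ε t p) ≤ v := by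
  set ν := μ₁.prod μ₂ with hν
  set c : Fin T → ℝ := fun t => ∫ p, ε t p ∂ν with hc
  set g : Fin T → Θ₁ → ℝ := fun t θ₁ => ∫ θ₂, ε t (θ₁, θ₂) ∂μ₂ with hg
  have hint : ∀ t, Integrable (ε t) ν := fun t => (hε t).integrable (by norm_num)
  have hsqε : ∀ t, Integrable (fun p => ε t p ^ 2) ν := fun t =>
    (memLp_two_iff_integrable_sq (hε t).aestronglyMeasurable).1 (hε t)
  have hsqsub : ∀ t, Integrable (fun p => (ε t p - c t) ^ 2) ν := fun t =>
    (memLp_two_iff_integrable_sq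
      ((hε t).aestronglyMeasurable.sub aestronglyMeasurable_const)).1
      ((hε t).sub (memLp_const _))
  -- a.e. slices are in L²
  have hslice : ∀ t, ∀ᵐ θ₁ ∂μ₁, MemLp (fun θ₂ => ε t (θ₁, θ₂)) 2 μ₂ := by
    intro t
    filter_upwards [(hint t).prod_right_ae, (hsqε t).prod_right_ae] with θ₁ h1 h2
    exact (memLp_two_iff_integrable_sq h1.aestronglyMeasurable).2 h2
  have hgm : ∀ t, AEStronglyMeasurable (g t) μ₁ := fun t =>
    (hε t).aestronglyMeasurable.integral_prod_right'
  -- Jensen: (g t θ₁ - c t)^2 ≤ ∫ θ₂, (ε t (θ₁,θ₂) - c t)^2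
  have hjensen : ∀ t, ∀ᵐ θ₁ ∂μ₁,
      (g t θ₁ - c t) ^ 2 ≤ ∫ θ₂, (ε t (θ₁, θ₂) - c t) ^ 2 ∂μ₂ := by
    intro t
    filter_upwards [hslice t, (hint t).prod_right_ae] with θ₁ hX hXint
    have hX' : MemLp (fun θ₂ => ε t (θ₁, θ₂) - c t) 2 μ₂ := hX.sub (memLp_const _)
    have hvd := ProbabilityTheory.variance_eq_sub hX'
    have hnn := ProbabilityTheory.variance_nonneg (fun θ₂ => ε t (θ₁, θ₂) - c t) μ₂
    have hEX : ∫ θ₂, (ε t (θ₁, θ₂) - c t) ∂μ₂ = g t θ₁ - c t := by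
      rw [integral_sub hXint (integrable_const _), integral_const]
      simp [hg]
    rw [hvd] at hnn
    simp only [Pi.pow_apply] at hnn
    rw [hEX] at hnn
    linarith
  -- the conditional means (centered, squared) are integrable
  have hM : ∀ t, Integrable (fun θ₁ => ∫ θ₂, (ε t (θ₁, θ₂) - c t) ^ 2 ∂μ₂) μ₁ :=
    fun t => (hsqsub t).integral_prod_left
  have hIsq : ∀ t, Integrable (fun θ₁ => (g t θ₁ - c t) ^ 2) μ₁ := by
    intro t
    refine Integrable.mono' (hM t) (((hgm t).sub aestronglyMeasurable_const).pow 2) ?_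
    filter_upwards [hjensen t] with θ₁ h
    rw [Real.norm_eq_abs, abs_of_nonneg (sq_nonneg _)]
    exact h
  have hvar' : ∀ t, ∫ θ₁, (g t θ₁ - c t) ^ 2 ∂μ₁ = v := fun t => hvar t
  -- compute the mean of the average
  have houter : (∫ p, (1 / (T : ℝ)) * ∑ t : Fin T, ε t p ∂ν)
      = (1 / (T : ℝ)) * ∑ t : Fin T, c t := by
    rw [integral_const_mul, integral_finset_sum _ fun t _ => hint t]
  -- rewrite the integrand a.e.
  have hcong : ∀ᵐ θ₁ ∂μ₁,
      (∫ θ₂, (1 / (T : ℝ)) * ∑ t : Fin T, ε t (θ₁, θ₂) ∂μ₂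
        - ∫ p, (1 / (T : ℝ)) * ∑ t : Fin T, ε t p ∂ν) ^ 2
      = ((1 / (T : ℝ)) * ∑ t : Fin T, (g t θ₁ - c t)) ^ 2 := by
    have hae : ∀ᵐ θ₁ ∂μ₁, ∀ t, Integrable (fun θ₂ => ε t (θ₁, θ₂)) μ₂ :=
      ae_all_iff.2 fun t => (hint t).prod_right_ae
    filter_upwards [hae] with θ₁ h
    have hin : (∫ θ₂, (1 / (T : ℝ)) * ∑ t : Fin T, ε t (θ₁, θ₂) ∂μ₂)
        = (1 / (T : ℝ)) * ∑ t : Fin T, g t θ₁ := by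
      rw [integral_const_mul, integral_finset_sum _ fun t _ => h t]
    rw [hin, houter, Finset.sum_sub_distrib, mul_sub]
  have key : varB1 μ₁ μ₂ (fun p => (1 / (T : ℝ)) * ∑ t : Fin T, ε t p)
      = ∫ θ₁, ((1 / (T : ℝ)) * ∑ t : Fin T, (g t θ₁ - c t)) ^ 2 ∂μ₁ :=
    integral_congr_ae hcong
  rw [key]
  have hle : ∫ θ₁, ((1 / (T : ℝ)) * ∑ t : Fin T, (g t θ₁ - c t)) ^ 2 ∂μ₁
      ≤ ∫ θ₁, (1 / (T : ℝ)) * ∑ t : Fin T, (g t θ₁ - c t) ^ 2 ∂μ₁ := by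
    refine integral_mono_of_nonneg (Filter.Eventually.of_forall fun θ₁ => sq_nonneg _)
      ((integrable_finset_sum _ fun t _ => hIsq t).const_mul _) ?_
    refine Filter.Eventually.of_forall fun θ₁ => ?_
    have hcheb : (∑ t : Fin T, (g t θ₁ - c t)) ^ 2
        ≤ (T : ℝ) * ∑ t : Fin T, (g t θ₁ - c t) ^ 2 := by
      have := sq_sum_le_card_mul_sum_sq (s := (univ : Finset (Fin T)))
        (f := fun t => g t θ₁ - c t)
      simpa using this
    have hT' : (0 : ℝ) < T := by exact_mod_cast hT
    simp only
    have h2 := mul_le_mul_of_nonneg_left hcheb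
      (le_of_lt (by positivity : (0:ℝ) < 1 / (T : ℝ) ^ 2))
    calc (1 / (T : ℝ) * ∑ t : Fin T, (g t θ₁ - c t)) ^ 2
        = 1 / (T : ℝ) ^ 2 * (∑ t : Fin T, (g t θ₁ - c t)) ^ 2 := by ring
      _ ≤ 1 / (T : ℝ) ^ 2 * ((T : ℝ) * ∑ t : Fin T, (g t θ₁ - c t) ^ 2) := h2
      _ = 1 / (T : ℝ) * ∑ t : Fin T, (g t θ₁ - c t) ^ 2 := by field_simp
  refine hle.trans_eq ?_
  rw [integral_const_mul, integral_finset_sum _ fun t _ => hIsq t]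
  simp only [hvar']
  rw [Finset.sum_const, card_univ, Fintype.card_fin, nsmul_eq_mul]
  have hT' : (0 : ℝ) < T := by exact_mod_cast hT
  field_simp
end
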